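/- Let X be a uniform space whose uniformity is totally bounded (i.e. the whole space X is a totally bounded set: for every entourage U there is a finite set F ⊆ X with X = ⋃_{x∈F} U[x], where U[x] = {y : (x,y) ∈ U}). Let κ be the least cardinality of a filter basis of the uniformity of X. Then the entourage poset of X is Tukey equivalent to [κ]^{<ω}. -/

import Mathlib

open Set Topology Cardinal

universe u

/-- A map `ψ : Q → P` is a Tukey map if the image of every unbounded set is unbounded. -/
def IsTukeyMap {Q P : Type*} [Preorder Q] [Preorder P] (ψ : Q → P) : Prop :=
  ∀ S : Set Q, ¬ BddAbove S → ¬ BddAbove (ψ '' S)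

/-- `TukeyGE P Q` means `P ≥_T Q`: there is a Tukey map from `Q` to `P`. -/
def TukeyGE (P Q : Type*) [Preorder P] [Preorder Q] : Prop :=
  ∃ ψ : Q → P, IsTukeyMap ψ

/-- Tukey equivalence of directed sets. -/
def TukeyEquiv (P Q : Type*) [Preorder P] [Preorder Q] : Prop :=
  TukeyGE P Q ∧ TukeyGE Q P

/-- The poset of entourages of a uniform space, ordered by reverse inclusion. -/
abbrev EntouragePoset (X : Type*) [UniformSpace X] :=
  ({U : Set (X × X) // U ∈ uniformity X})ᵒᵈ

section Aux
open Filter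
open scoped Uniformity
variable {X : Type u} [UniformSpace X]

/-- An entourage chain: a sequence of symmetric entourages with composition control. -/
structure UChain (X : Type u) [UniformSpace X] : Type u where
  V : ℕ → Set (X × X)
  mem : ∀ n, V n ∈ 𝓤 X
  symm : ∀ n a b, (a, b) ∈ V n → (b, a) ∈ V n
  comp : ∀ n a b c, (a, b) ∈ V (n + 1) → (b, c) ∈ V (n + 1) → (a, c) ∈ V n

namespace UChain

lemma step_anti (c : UChain X) (n : ℕ) : c.V (n + 1) ⊆ c.V n := by
  rintro ⟨a, b⟩ hab
  exact c.comp n a b b hab (refl_mem_uniformity (c.mem (n + 1)))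

lemma anti (c : UChain X) {m n : ℕ} (h : m ≤ n) : c.V n ⊆ c.V m := by
  induction n with
  | zero => simp_all
  | succ k ih =>
    rcases Nat.lt_or_ge m (k + 1) with hk | hk
    · exact (c.step_anti k).trans (ih (Nat.lt_succ_iff.mp hk))
    · have : m = k + 1 := le_antisymm h hk
      subst this; rfl

lemma comp3 (c : UChain X) (n : ℕ) {a b d e : X}
    (h1 : (a, b) ∈ c.V (n + 2)) (h2 : (b, d) ∈ c.V (n + 2)) (h3 : (d, e) ∈ c.V (n + 2)) :
    (a, e) ∈ c.V n := by
  have had : (a, d) ∈ c.V (n + 1) := c.comp (n + 1) a b d h1 h2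
  exact c.comp n a d e had (c.step_anti (n + 1) h3)

end UChain

lemma exists_uchain {U : Set (X × X)} (hU : U ∈ 𝓤 X) : ∃ c : UChain X, c.V 0 ⊆ U := by
  have step : ∀ s : {s : Set (X × X) // s ∈ 𝓤 X},
      ∃ t : {s : Set (X × X) // s ∈ 𝓤 X},
        (∀ a b, (a, b) ∈ t.1 → (b, a) ∈ t.1) ∧
        (∀ a b c, (a, b) ∈ t.1 → (b, c) ∈ t.1 → (a, c) ∈ s.1) := by
    rintro ⟨s, hs⟩
    obtain ⟨t, ht, htsymm, htcomp⟩ := comp_symm_mem_uniformity_sets hs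
    refine ⟨⟨t, ht⟩, ?_, ?_⟩
    · intro a b hab
      exact htsymm.symm a b hab
    · intro a b c hab hbc
      exact htcomp ⟨b, hab, hbc⟩
  choose F hF1 hF2 using step
  let seq : ℕ → {s : Set (X × X) // s ∈ 𝓤 X} := fun n =>
    Nat.rec (F ⟨U, hU⟩) (fun _ ih => F ih) n
  have hseq_succ : ∀ n, seq (n + 1) = F (seq n) := fun n => rfl
  refine ⟨⟨fun n => (seq n).1, fun n => (seq n).2, ?_, ?_⟩, ?_⟩
  · intro n a b hab
    cases n with
    | zero => exact hF1 ⟨U, hU⟩ a b hab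
    | succ k => exact hF1 (seq k) a b hab
  · intro n a b c hab hbc
    exact hF2 (seq n) a b c hab hbc
  · intro p hp
    rcases p with ⟨a, b⟩
    have : (a, a) ∈ (seq 0).1 := refl_mem_uniformity (seq 0).2
    exact hF2 ⟨U, hU⟩ a a b this hp


/-- The easy direction: `[κ]^{<ω} ≥_T` entourage poset, via a basis of size κ. -/
lemma tukeyGE_finset_of_basis {α : Type u} (B : Set (Set (X × X)))
    (hB1 : ∀ U ∈ B, U ∈ 𝓤 X) (hB2 : ∀ U ∈ 𝓤 X, ∃ V ∈ B, V ⊆ U)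
    (e : ↥B ≃ α) : TukeyGE (Finset α) (EntouragePoset X) := by
  classical
  refine ⟨fun U => {e ⟨(hB2 (OrderDual.ofDual U).1 (OrderDual.ofDual U).2).choose,
      (hB2 (OrderDual.ofDual U).1 (OrderDual.ofDual U).2).choose_spec.1⟩}, ?_⟩
  intro S hS hbdd
  apply hS
  obtain ⟨t, ht⟩ := hbdd
  have hW : (⋂ x ∈ t, ((e.symm x : ↥B) : Set (X × X))) ∈ 𝓤 X :=
    (Filter.biInter_finset_mem t).mpr fun x _ => hB1 _ (e.symm x).2
  refine ⟨OrderDual.toDual ⟨_, hW⟩, ?_⟩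
  intro a haS
  have hmem : e ⟨(hB2 (OrderDual.ofDual a).1 (OrderDual.ofDual a).2).choose,
      (hB2 (OrderDual.ofDual a).1 (OrderDual.ofDual a).2).choose_spec.1⟩ ∈ t := by
    have := ht (Set.mem_image_of_mem _ haS)
    exact this (Finset.mem_singleton_self _)
  show (⋂ x ∈ t, ((e.symm x : ↥B) : Set (X × X))) ⊆ (OrderDual.ofDual a).1
  refine (Set.biInter_subset_of_mem hmem).trans ?_
  rw [Equiv.symm_apply_apply]
  exact (hB2 (OrderDual.ofDual a).1 (OrderDual.ofDual a).2).choose_spec.2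

/-- From a "strongly unbounded" family of entourages indexed by a type of size ≥ #α,
we get the hard Tukey direction. -/
lemma tukeyGE_of_goodFam {α : Type u} {ι' : Type*} (emb : α ↪ ι')
    (Wf : ι' → Set (X × X)) (hWf : ∀ i, Wf i ∈ 𝓤 X)
    (hGood : ∀ A : Set ι', A.Infinite → ∀ W ∈ 𝓤 X, ¬ (∀ i ∈ A, W ⊆ Wf i)) :
    TukeyGE (EntouragePoset X) (Finset α) := by
  classical
  refine ⟨fun s => OrderDual.toDual ⟨⋂ x ∈ s, Wf (emb x),
    (Filter.biInter_finset_mem s).mpr fun x _ => hWf _⟩, ?_⟩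
  intro S hS hbdd
  obtain ⟨b, hb⟩ := hbdd
  set A : Set α := {x | ∃ s ∈ S, x ∈ s} with hA_def
  have hA : A.Infinite := by
    by_contra hfin
    rw [Set.not_infinite] at hfin
    apply hS
    refine ⟨hfin.toFinset, fun s hsS => ?_⟩
    intro x hxs
    exact hfin.mem_toFinset.mpr ⟨s, hsS, hxs⟩
  refine hGood (emb '' A) (hA.image emb.injective.injOn) (OrderDual.ofDual b).1
    (OrderDual.ofDual b).2 ?_
  rintro i ⟨x, hxA, rfl⟩
  obtain ⟨s, hsS, hxs⟩ := hxA
  have hle := hb (Set.mem_image_of_mem _ hsS)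
  have hsub : (OrderDual.ofDual b).1 ⊆ ⋂ x ∈ s, Wf (emb x) := hle
  exact hsub.trans (Set.biInter_subset_of_mem hxs)


/-- An equivalence-relation entourage below any given entourage, assuming countable
directedness of the uniformity. -/
lemma exists_eqv_entourage
    (hsd : ∀ C : ℕ → Set (X × X), (∀ n, C n ∈ 𝓤 X) → ∃ W ∈ 𝓤 X, ∀ n, W ⊆ C n)
    {U : Set (X × X)} (hU : U ∈ 𝓤 X) :
    ∃ Z ∈ 𝓤 X, Z ⊆ U ∧ (∀ a b, (a, b) ∈ Z → (b, a) ∈ Z) ∧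
      (∀ a b c, (a, b) ∈ Z → (b, c) ∈ Z → (a, c) ∈ Z) := by
  obtain ⟨c, hc0⟩ := exists_uchain hU
  obtain ⟨W, hW, hWsub⟩ := hsd c.V c.mem
  refine ⟨⋂ n, c.V n, Filter.mem_of_superset hW (Set.subset_iInter hWsub), ?_, ?_, ?_⟩
  · exact (Set.iInter_subset _ 0).trans hc0
  · intro a b hab
    exact Set.mem_iInter.mpr fun n => c.symm n a b (Set.mem_iInter.mp hab n)
  · intro a b d hab hbd
    refine Set.mem_iInter.mpr fun n => ?_
    exact c.comp n a b d (Set.mem_iInter.mp hab (n + 1)) (Set.mem_iInter.mp hbd (n + 1))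

/-- If the uniformity is totally bounded, has no minimum, then there is a decreasing
sequence of entourages with no common lower entourage. -/
lemma exists_unbounded_chain (htb : TotallyBounded (Set.univ : Set X))
    (hnomin : ∀ W ∈ 𝓤 X, ∃ U ∈ 𝓤 X, ¬ W ⊆ U) :
    ∃ E : ℕ → Set (X × X), (∀ m, E m ∈ 𝓤 X) ∧ (∀ m n, m ≤ n → E n ⊆ E m) ∧
      ∀ W ∈ 𝓤 X, ∃ m, ¬ W ⊆ E m := by
  by_cases hsd : ∀ C : ℕ → Set (X × X), (∀ n, C n ∈ 𝓤 X) → ∃ W ∈ 𝓤 X, ∀ n, W ⊆ C n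
  · exfalso
    -- countably directed: build a strictly decreasing chain of equivalence entourages
    have step : ∀ Z : {Z : Set (X × X) // Z ∈ 𝓤 X ∧ (∀ a b, (a, b) ∈ Z → (b, a) ∈ Z) ∧
        (∀ a b c, (a, b) ∈ Z → (b, c) ∈ Z → (a, c) ∈ Z)},
        ∃ Z' : {Z : Set (X × X) // Z ∈ 𝓤 X ∧ (∀ a b, (a, b) ∈ Z → (b, a) ∈ Z) ∧
          (∀ a b c, (a, b) ∈ Z → (b, c) ∈ Z → (a, c) ∈ Z)},
          Z'.1 ⊆ Z.1 ∧ ∃ p : X × X, p ∈ Z.1 ∧ p ∉ Z'.1 := by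
      rintro ⟨Z, hZ, hZs, hZt⟩
      obtain ⟨V, hV, hnsub⟩ := hnomin Z hZ
      obtain ⟨Z', hZ'm, hZ'sub, hZ's, hZ't⟩ := exists_eqv_entourage hsd (inter_mem hZ hV)
      obtain ⟨p, hpZ, hpV⟩ := Set.not_subset.mp hnsub
      refine ⟨⟨Z', hZ'm, hZ's, hZ't⟩, hZ'sub.trans Set.inter_subset_left, p, hpZ, ?_⟩
      intro hp
      exact hpV (hZ'sub.trans Set.inter_subset_right hp)
    obtain ⟨Z0, hZ0m, hZ0sub, hZ0s, hZ0t⟩ := exists_eqv_entourage hsd univ_mem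
    choose F hFsub hFp using step
    let seq : ℕ → {Z : Set (X × X) // Z ∈ 𝓤 X ∧ (∀ a b, (a, b) ∈ Z → (b, a) ∈ Z) ∧
        (∀ a b c, (a, b) ∈ Z → (b, c) ∈ Z → (a, c) ∈ Z)} := fun n =>
      Nat.rec ⟨Z0, hZ0m, hZ0s, hZ0t⟩ (fun _ ih => F ih) n
    have hseq_anti : ∀ m n, m ≤ n → (seq n).1 ⊆ (seq m).1 := by
      intro m n h
      induction n with
      | zero => simp_all
      | succ k ih =>
        rcases Nat.lt_or_ge m (k + 1) with hk | hk
        · exact (hFsub (seq k)).trans (ih (Nat.lt_succ_iff.mp hk))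
        · have : m = k + 1 := le_antisymm h hk
          subst this; rfl
    -- Zω
    obtain ⟨W, hW, hWsub⟩ := hsd (fun n => (seq n).1) (fun n => (seq n).2.1)
    set Zω : Set (X × X) := ⋂ n, (seq n).1 with hZω_def
    have hZωt : ∀ a b c, (a, b) ∈ Zω → (b, c) ∈ Zω → (a, c) ∈ Zω := by
      intro a b c hab hbc
      exact Set.mem_iInter.mpr fun n => (seq n).2.2.2 a b c
        (Set.mem_iInter.mp hab n) (Set.mem_iInter.mp hbc n)
    have hZωs : ∀ a b, (a, b) ∈ Zω → (b, a) ∈ Zω := by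
      intro a b hab
      exact Set.mem_iInter.mpr fun n => (seq n).2.2.1 a b (Set.mem_iInter.mp hab n)
    have hZωm : Zω ∈ 𝓤 X := Filter.mem_of_superset hW (Set.subset_iInter hWsub)
    have hZωr : ∀ a : X, (a, a) ∈ Zω := fun a => refl_mem_uniformity hZωm
    -- finite quotient
    let sd : Setoid X := ⟨fun a b => (a, b) ∈ Zω,
      ⟨fun a => hZωr a, fun h => hZωs _ _ h, fun h h' => hZωt _ _ _ h h'⟩⟩
    obtain ⟨t, htfin, htcov⟩ := htb Zω hZωm
    haveI : Finite ↥t := htfin.to_subtype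
    have hsurj : Function.Surjective (fun y : ↥t => (Quotient.mk sd y.1 : Quotient sd)) := by
      intro q
      obtain ⟨x, rfl⟩ := Quotient.exists_rep q
      have hx : x ∈ ⋃ y ∈ t, {x' | (x', y) ∈ Zω} := htcov (Set.mem_univ x)
      obtain ⟨y, hyt, hxy⟩ := Set.mem_iUnion₂.mp hx
      exact ⟨⟨y, hyt⟩, Quotient.sound (hZωs _ _ hxy)⟩
    haveI : Finite (Quotient sd) := Finite.of_surjective _ hsurj
    -- pigeonhole on pairs of classes
    let pr : ℕ → X × X := fun n => hFp (seq n) |>.choose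
    have hpr1 : ∀ n, pr n ∈ (seq n).1 := fun n => (hFp (seq n)).choose_spec.1
    have hpr2 : ∀ n, pr n ∉ (seq (n + 1)).1 := fun n => (hFp (seq n)).choose_spec.2
    let G : ℕ → Quotient sd × Quotient sd := fun n =>
      (Quotient.mk sd (pr n).1, Quotient.mk sd (pr n).2)
    obtain ⟨m, m', hne, heq⟩ := Finite.exists_ne_map_eq_of_infinite G
    -- wlog m < m'
    have key : ∀ m m', m < m' → G m = G m' → False := by
      intro m m' hlt heq
      have ha : ((pr m).1, (pr m').1) ∈ Zω := Quotient.exact (congrArg Prod.fst heq)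
      have hb : ((pr m').2, (pr m).2) ∈ Zω := hZωs _ _ (Quotient.exact (congrArg Prod.snd heq))
      have hmid : ((pr m').1, (pr m').2) ∈ (seq (m + 1)).1 :=
        hseq_anti (m + 1) m' hlt (by simpa using hpr1 m')
      have hZsub : Zω ⊆ (seq (m + 1)).1 := Set.iInter_subset _ (m + 1)
      have h1 : ((pr m).1, (pr m').2) ∈ (seq (m + 1)).1 :=
        (seq (m + 1)).2.2.2 _ _ _ (hZsub ha) hmid
      have h2 : ((pr m).1, (pr m).2) ∈ (seq (m + 1)).1 :=
        (seq (m + 1)).2.2.2 _ _ _ h1 (hZsub hb)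
      exact hpr2 m (by simpa using h2)
    rcases hne.lt_or_gt with h | h
    · exact key m m' h heq
    · exact key m' m h heq.symm
  · push_neg at hsd
    obtain ⟨C, hC, hCnb⟩ := hsd
    refine ⟨fun m => ⋂ k ∈ Finset.range (m + 1), C k, ?_, ?_, ?_⟩
    · intro m
      exact (Filter.biInter_finset_mem _).mpr fun k _ => hC k
    · intro m n hmn x hx
      refine Set.mem_iInter₂.mpr fun k hk => ?_
      exact Set.mem_iInter₂.mp hx k
        (Finset.mem_range.mpr (lt_of_lt_of_le (Finset.mem_range.mp hk) (by omega)))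
    · intro W hW
      obtain ⟨n, hn⟩ := hCnb W hW
      refine ⟨n, fun hsub => hn ?_⟩
      exact hsub.trans (Set.biInter_subset_of_mem (Finset.self_mem_range_succ n))


set_option maxHeartbeats 1000000 in
/-- The main construction for uncountable κ: a strongly unbounded family of size κ. -/
lemma exists_goodFam_uncountable (htb : TotallyBounded (Set.univ : Set X))
    {κ : Cardinal.{u}} (hκ : ℵ₀ < κ)
    (B : Set (Set (X × X))) (hB1 : ∀ U ∈ B, U ∈ 𝓤 X)
    (hB2 : ∀ U ∈ 𝓤 X, ∃ V ∈ B, V ⊆ U) (hcard : #B = κ)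
    (hleast : ∀ B' : Set (Set (X × X)), (∀ U ∈ B', U ∈ 𝓤 X) →
      (∀ U ∈ 𝓤 X, ∃ V ∈ B', V ⊆ U) → κ ≤ #B') :
    ∃ (ι' : Type u) (Wf : ι' → Set (X × X)), κ ≤ #ι' ∧ (∀ i, Wf i ∈ 𝓤 X) ∧
      ∀ A : Set ι', A.Infinite → ∀ W ∈ 𝓤 X, ¬ (∀ i ∈ A, W ⊆ Wf i) := by
  classical
  -- the uniformity has no minimum
  have hnomin : ∀ W ∈ 𝓤 X, ∃ U ∈ 𝓤 X, ¬ W ⊆ U := by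
    intro W hW
    by_contra h
    push_neg at h
    have h1 := hleast {W} (by simpa using hW)
      (fun U hU => ⟨W, Set.mem_singleton _, h U hU⟩)
    rw [Cardinal.mk_singleton] at h1
    exact absurd h1 (not_le.mpr (lt_trans Cardinal.one_lt_aleph0 hκ))
  obtain ⟨E, hEm, hEanti, hEnb⟩ := exists_unbounded_chain htb hnomin
  set ι := κ.ord.ToType with hι_def
  have hιcard : #ι = κ := by rw [Cardinal.mk_toType, Cardinal.card_ord]
  have eB : ι ≃ ↥B := (Cardinal.eq.mp (hιcard.trans hcard.symm)).some
  have hch : ∀ i : ι, ∃ c : UChain X, c.V 0 ⊆ ((eB i : ↥B) : Set (X × X)) :=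
    fun i => exists_uchain (hB1 _ (eB i).2)
  choose f hf0 using hch
  have Gen : ∀ U ∈ 𝓤 X, ∃ i : ι, ∃ n, (f i).V n ⊆ U := by
    intro U hU
    obtain ⟨V, hVB, hVU⟩ := hB2 U hU
    refine ⟨eB.symm ⟨V, hVB⟩, 0, ?_⟩
    have h0 := hf0 (eB.symm ⟨V, hVB⟩)
    rw [Equiv.apply_symm_apply] at h0
    exact h0.trans hVU
  let PastFact : ι → Set (X × X) → Prop := fun i A =>
    ∃ G : Finset ι, (∀ j ∈ G, j < i) ∧ ∃ n : ℕ, (⋂ j ∈ G, (f j).V n) ⊆ A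
  set Sel : Set ι := {i | ∃ s : ℕ, ¬ PastFact i ((f i).V s)} with hSel_def
  have claim1 : κ ≤ #↥Sel := by
    by_contra hlt
    push_neg at hlt
    have SelFact : ∀ i : ι, ∀ ℓ : ℕ, ∃ G : Finset ι, (↑G ⊆ Sel) ∧
        ∃ n, (⋂ j ∈ G, (f j).V n) ⊆ (f i).V ℓ := by
      intro i
      induction i using WellFoundedLT.induction with
      | ind i IH =>
        intro ℓ
        by_cases hi : i ∈ Sel
        · refine ⟨{i}, by simpa using hi, ℓ, ?_⟩
          intro x hx
          exact Set.mem_iInter₂.mp hx i (Finset.mem_singleton_self i)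
        · have hfact : ∀ s : ℕ, PastFact i ((f i).V s) := by
            by_contra hc
            push_neg at hc
            exact hi hc
          obtain ⟨G', hG'lt, n', hG'sub⟩ := hfact ℓ
          have H : ∀ j ∈ G', ∃ G : Finset ι, (↑G ⊆ Sel) ∧
              ∃ n, (⋂ k ∈ G, (f k).V n) ⊆ (f j).V n' :=
            fun j hj => IH j (hG'lt j hj) n'
          choose! g hgSel gn hgn using H
          refine ⟨G'.biUnion g, ?_, G'.sup gn, ?_⟩
          · intro k hk
            simp only [Finset.coe_biUnion, Set.mem_iUnion] at hk
            obtain ⟨j, hj, hkj⟩ := hk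
            exact hgSel j hj hkj
          · intro x hx
            apply hG'sub
            refine Set.mem_iInter₂.mpr fun j hj => ?_
            apply hgn j hj
            refine Set.mem_iInter₂.mpr fun k hk => ?_
            exact (f k).anti (Finset.le_sup hj)
              (Set.mem_iInter₂.mp hx k (Finset.mem_biUnion.mpr ⟨j, hj, hk⟩))
    let bas : Set (Set (X × X)) :=
      Set.range (fun p : Finset ↥Sel × ℕ => ⋂ j ∈ p.1, (f j.1).V p.2)
    have hbas1 : ∀ A ∈ bas, A ∈ 𝓤 X := by
      rintro A ⟨⟨G, n⟩, rfl⟩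
      exact (Filter.biInter_finset_mem _).mpr fun j _ => (f j.1).mem n
    have hbas2 : ∀ U ∈ 𝓤 X, ∃ A ∈ bas, A ⊆ U := by
      intro U hU
      obtain ⟨i, n, hin⟩ := Gen U hU
      obtain ⟨G, hGSel, m, hGsub⟩ := SelFact i n
      refine ⟨⋂ j ∈ G.subtype (· ∈ Sel), (f j.1).V m, ⟨⟨G.subtype (· ∈ Sel), m⟩, rfl⟩, ?_⟩
      refine Set.Subset.trans ?_ (hGsub.trans hin)
      intro x hx
      refine Set.mem_iInter₂.mpr fun k hk => ?_
      exact Set.mem_iInter₂.mp hx ⟨k, hGSel hk⟩ (Finset.mem_subtype.mpr hk)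
    have hle := hleast bas hbas1 hbas2
    have hfin : #(Finset ↥Sel) < κ := by
      rcases finite_or_infinite ↥Sel with h | h
      · haveI := Fintype.ofFinite ↥Sel
        exact lt_trans (Cardinal.lt_aleph0_of_finite _) hκ
      · rw [Cardinal.mk_finset_of_infinite]
        exact hlt
    have hsmall : #↥bas < κ := by
      refine lt_of_le_of_lt Cardinal.mk_range_le ?_
      rw [Cardinal.mk_prod, Cardinal.mk_nat, Cardinal.lift_aleph0, Cardinal.lift_uzero]
      exact Cardinal.mul_lt_of_lt hκ.le hfin hκ
    exact absurd (hle.trans_lt hsmall) (lt_irrefl κ)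
  -- selection data
  have hSelP : ∀ i : ↥Sel, ∃ s : ℕ, ¬ PastFact i.1 ((f i.1).V s) := fun i => i.2
  choose sfun hsfun using hSelP
  let Wf : ↥Sel → Set (X × X) := fun i => (f i.1).V (sfun i + 10) ∩ E (sfun i)
  refine ⟨↥Sel, Wf, claim1, fun i => Filter.inter_mem ((f i.1).mem _) (hEm _), ?_⟩
  intro A hA W hW hWA
  by_cases hbd : ∃ b : ℕ, ∀ i ∈ A, sfun i ≤ b
  case neg =>
    push_neg at hbd
    obtain ⟨m, hm⟩ := hEnb W hW
    obtain ⟨i, hiA, hib⟩ := hbd m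
    exact hm (((hWA i hiA).trans Set.inter_subset_right).trans
      (hEanti m (sfun i) (by omega)))
  case pos =>
  obtain ⟨b, hb⟩ := hbd
  haveI : Infinite ↥A := Set.infinite_coe_iff.mpr hA
  let g : ↥A → Fin (b + 1) := fun i => ⟨sfun i.1, by have := hb i.1 i.2; omega⟩
  obtain ⟨s0, hs0⟩ := Finite.exists_infinite_fiber g
  haveI hs0' : Infinite ↥(g ⁻¹' {s0}) := hs0
  obtain ⟨i0, n0, hi0⟩ := Gen W hW
  obtain ⟨t, htfin, htcov⟩ := htb ((f i0).V (n0 + 1)) ((f i0).mem _)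
  haveI : Finite ↥t := htfin.to_subtype
  have hnet : ∀ a : X, ∃ y, y ∈ t ∧ (a, y) ∈ (f i0).V (n0 + 1) := by
    intro a
    obtain ⟨y, hyt, hay⟩ := Set.mem_iUnion₂.mp (htcov (Set.mem_univ a))
    exact ⟨y, hyt, hay⟩
  have hpair : ∀ a c y : X, (a, y) ∈ (f i0).V (n0 + 1) → (c, y) ∈ (f i0).V (n0 + 1) →
      (a, c) ∈ W := by
    intro a c y hay hcy
    exact hi0 ((f i0).comp n0 a y c hay ((f i0).symm _ _ _ hcy))
  have hrefl : ∀ y : X, (y, y) ∈ (f i0).V (n0 + 1) :=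
    fun y => refl_mem_uniformity ((f i0).mem _)
  -- W is below the chain of each selected index in the fiber, at scale s0+10
  have hsval : ∀ i : ↥(g ⁻¹' {s0}), sfun i.1.1 = (s0 : ℕ) := by
    intro i
    have h2 : g i.1 = s0 := i.2
    exact congrArg Fin.val h2
  have hWi : ∀ i : ↥(g ⁻¹' {s0}), W ⊆ (f i.1.1.1).V ((s0 : ℕ) + 10) := by
    intro i
    have h3 := (hWA i.1.1 i.1.2).trans Set.inter_subset_left
    rwa [hsval i] at h3
  -- pigeonhole on discretized chain-membership data over the net
  let CAP : ℕ := (s0 : ℕ) + 8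
  let D : ↥(g ⁻¹' {s0}) → ((↥t × ↥t) × Fin (CAP + 1)) → Bool := fun i p =>
    decide (((p.1.1 : X), (p.1.2 : X)) ∈ (f i.1.1.1).V p.2.1)
  obtain ⟨i, j, hij, hDij⟩ := Finite.exists_ne_map_eq_of_infinite D
  have key : ∀ i j : ↥(g ⁻¹' {s0}), D i = D j → j.1.1.1 < i.1.1.1 → False := by
    intro i j hD hlt
    refine hsfun i.1.1 ⟨{j.1.1.1}, ?_, (s0 : ℕ) + 10, ?_⟩
    · intro x hx
      rw [Finset.mem_singleton] at hx
      subst hx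
      exact hlt
    · rw [hsval i]
      rintro ⟨a, c⟩ hp
      have hac : (a, c) ∈ (f j.1.1.1).V ((s0 : ℕ) + 10) :=
        Set.mem_iInter₂.mp hp j.1.1.1 (Finset.mem_singleton_self _)
      obtain ⟨y, hyt, hay⟩ := hnet a
      obtain ⟨y', hy't, hcy'⟩ := hnet c
      have hya : (y, a) ∈ W := hpair y a y (hrefl y) hay
      have hay' : (a, y) ∈ W := hpair a y y hay (hrefl y)
      have hcy : (c, y') ∈ W := hpair c y' y' hcy' (hrefl y')
      have hy'c : (y', c) ∈ W := hpair y' c y' (hrefl y') hcy'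
      -- (y, y') in the j-chain at level s0 + 8
      have hyy'j : (y, y') ∈ (f j.1.1.1).V ((s0 : ℕ) + 8) := by
        refine (f j.1.1.1).comp3 ((s0 : ℕ) + 8)
          ((f j.1.1.1).anti (by omega) (hWi j hya))
          ((f j.1.1.1).anti (by omega) hac)
          ((f j.1.1.1).anti (by omega) (hWi j hcy))
      -- transfer to the i-chain via the pigeonhole equality
      have hyy'i : (y, y') ∈ (f i.1.1.1).V ((s0 : ℕ) + 8) := by
        have hEq := congrFun hD (((⟨y, hyt⟩, ⟨y', hy't⟩) : ↥t × ↥t),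
          (⟨(s0 : ℕ) + 8, by omega⟩ : Fin (CAP + 1)))
        have hiff := decide_eq_decide.mp hEq
        exact hiff.mpr hyy'j
      -- conclude (a, c) in the i-chain at level s0
      refine (f i.1.1.1).anti (by omega) ((f i.1.1.1).comp3 ((s0 : ℕ) + 6)
        ((f i.1.1.1).anti (by omega) (hWi i hay'))
        ((f i.1.1.1).anti (by omega) hyy'i)
        ((f i.1.1.1).anti (by omega) (hWi i hy'c)))
  have hne' : i.1.1.1 ≠ j.1.1.1 := by
    intro h
    exact hij (Subtype.ext (Subtype.ext (Subtype.ext h)))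
  rcases hne'.lt_or_gt with h | h
  · exact key j i hDij.symm h
  · exact key i j hDij h


/-- The countable case: a strongly unbounded family indexed by ℕ. -/
lemma exists_goodFam_aleph0 {κ : Cardinal.{u}} (hκ : κ = ℵ₀)
    (B : Set (Set (X × X))) (hB1 : ∀ U ∈ B, U ∈ 𝓤 X)
    (hB2 : ∀ U ∈ 𝓤 X, ∃ V ∈ B, V ⊆ U) (hcard : #B = κ)
    (hleast : ∀ B' : Set (Set (X × X)), (∀ U ∈ B', U ∈ 𝓤 X) →
      (∀ U ∈ 𝓤 X, ∃ V ∈ B', V ⊆ U) → κ ≤ #B') :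
    ∃ Wf : ℕ → Set (X × X), (∀ n, Wf n ∈ 𝓤 X) ∧
      ∀ A : Set ℕ, A.Infinite → ∀ W ∈ 𝓤 X, ¬ (∀ n ∈ A, W ⊆ Wf n) := by
  classical
  have hnomin : ∀ W ∈ 𝓤 X, ∃ U ∈ 𝓤 X, ¬ W ⊆ U := by
    intro W hW
    by_contra h
    push_neg at h
    have h1 := hleast {W} (by simpa using hW)
      (fun U hU => ⟨W, Set.mem_singleton _, h U hU⟩)
    rw [Cardinal.mk_singleton, hκ] at h1
    exact absurd h1 (not_le.mpr Cardinal.one_lt_aleph0)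
  haveI hBc : Countable ↥B := Cardinal.mk_le_aleph0_iff.mp (by rw [hcard, hκ])
  haveI hBi : Infinite ↥B := Cardinal.infinite_iff.mpr (by rw [hcard, hκ])
  obtain ⟨hden⟩ := nonempty_denumerable ↥B
  have e : ℕ ≃ ↥B := (Denumerable.eqv ↥B).symm
  refine ⟨fun n => ⋂ k ∈ Finset.range (n + 1), ((e k : ↥B) : Set (X × X)), ?_, ?_⟩
  · intro n
    exact (Filter.biInter_finset_mem _).mpr fun k _ => hB1 _ (e k).2
  · intro A hA W hW hWA
    have hanti : ∀ m n : ℕ, m ≤ n →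
        (⋂ k ∈ Finset.range (n + 1), ((e k : ↥B) : Set (X × X))) ⊆
          ⋂ k ∈ Finset.range (m + 1), ((e k : ↥B) : Set (X × X)) := by
      intro m n hmn x hx
      refine Set.mem_iInter₂.mpr fun k hk => ?_
      exact Set.mem_iInter₂.mp hx k
        (Finset.mem_range.mpr (lt_of_lt_of_le (Finset.mem_range.mp hk) (by omega)))
    have hWall : ∀ m : ℕ, W ⊆ ⋂ k ∈ Finset.range (m + 1), ((e k : ↥B) : Set (X × X)) := by
      intro m
      obtain ⟨n, hnA, hmn⟩ := hA.exists_gt m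
      exact (hWA n hnA).trans (hanti m n hmn.le)
    obtain ⟨U, hU, hnsub⟩ := hnomin W hW
    obtain ⟨V, hVB, hVU⟩ := hB2 U hU
    apply hnsub
    refine Set.Subset.trans ?_ hVU
    have := hWall (e.symm ⟨V, hVB⟩)
    refine this.trans ?_
    refine Set.Subset.trans (Set.biInter_subset_of_mem (Finset.self_mem_range_succ _)) ?_
    rw [Equiv.apply_symm_apply]

end Aux

/-- A totally bounded uniformity is Tukey equivalent to `[κ]^{<ω}` where `κ` is the
least cardinality of a basis of the uniformity. -/
theorem stmt10 {X : Type u} [UniformSpace X]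
    (htb : TotallyBounded (Set.univ : Set X))
    (κ : Cardinal.{u})
    (hbasis : ∃ B : Set (Set (X × X)), (∀ U ∈ B, U ∈ uniformity X) ∧
      (∀ U ∈ uniformity X, ∃ V ∈ B, V ⊆ U) ∧ #B = κ)
    (hleast : ∀ B : Set (Set (X × X)), (∀ U ∈ B, U ∈ uniformity X) →
      (∀ U ∈ uniformity X, ∃ V ∈ B, V ⊆ U) → κ ≤ #B) :
    TukeyEquiv (EntouragePoset X) (Finset κ.out) := by
  classical
  obtain ⟨B, hB1, hB2, hcard⟩ := hbasis
  have eB : ↥B ≃ κ.out := (Cardinal.eq.mp (by rw [hcard, Cardinal.mk_out])).some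
  refine ⟨?_, tukeyGE_finset_of_basis B hB1 hB2 eB⟩
  rcases lt_or_ge κ ℵ₀ with hκ | hκ
  · -- degenerate case: κ finite, everything is bounded
    haveI : Finite κ.out := Cardinal.mk_lt_aleph0_iff.mp (by rwa [Cardinal.mk_out])
    haveI := Fintype.ofFinite κ.out
    refine ⟨fun _ => OrderDual.toDual ⟨Set.univ, Filter.univ_mem⟩, ?_⟩
    intro S hS _
    exact hS ⟨Finset.univ, fun s _ => Finset.le_iff_subset.mpr (Finset.subset_univ s)⟩
  · rcases eq_or_lt_of_le hκ with hκeq | hκgt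
    · obtain ⟨Wf, hWf, hGood⟩ := exists_goodFam_aleph0 hκeq.symm B hB1 hB2 hcard hleast
      haveI : Countable κ.out := Cardinal.mk_le_aleph0_iff.mp
        (by rw [Cardinal.mk_out, ← hκeq])
      obtain ⟨femb, hfemb⟩ := countable_iff_exists_injective κ.out |>.mp ‹_›
      have emb : κ.out ↪ ℕ := ⟨femb, hfemb⟩
      exact tukeyGE_of_goodFam emb Wf hWf hGood
    · obtain ⟨ι', Wf, hι', hWf, hGood⟩ :=
        exists_goodFam_uncountable htb hκgt B hB1 hB2 hcard hleast
      have emb : κ.out ↪ ι' :=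
        ((Cardinal.le_def _ _).mp (by rw [Cardinal.mk_out]; exact hι')).some
      exact tukeyGE_of_goodFam emb Wf hWf hGood
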